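/- Let A be a central simple algebra over an infinite field F, char F ≠ 3, with primitive cube root of unity ρ ∈ F. Suppose x, y, z are linearly independent 3-central elements with y x = ρ x y, x z = ρ z x, z y = ρ y z (a 3-cycle in the commutation graph). Then F x + F y + F z is a 3-central space if and only if x y z ∈ F. -/
import Mathlib

section Helpers

variable {F A : Type*} [Field F] [Ring A] [Algebra F A]

lemma my_smul_cancel {t : F} (ht : t ≠ 0) {u v : A} (h : t • u = t • v) : u = v := by
  have h2 := congrArg (t⁻¹ • ·) h
  simpa [smul_smul, inv_mul_cancel₀ ht] using h2

lemma cube3 (ρ : F) (hρ1 : ρ^2 + ρ + 1 = 0)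
    (X Y Z : A) (hYX : Y*X = ρ•(X*Y)) (hZX : Z*X = (ρ^2)•(X*Z)) (hZY : Z*Y = ρ•(Y*Z)) :
    (X+Y+Z)^3 = X^3 + Y^3 + Z^3 - (3*ρ^2)•(X*(Y*Z)) := by
  have hYXw : ∀ w : A, Y*(X*w) = ρ•(X*(Y*w)) := by
    intro w; rw [← mul_assoc, hYX, smul_mul_assoc, mul_assoc]
  have hZXw : ∀ w : A, Z*(X*w) = (ρ^2)•(X*(Z*w)) := by
    intro w; rw [← mul_assoc, hZX, smul_mul_assoc, mul_assoc]
  have hZYw : ∀ w : A, Z*(Y*w) = ρ•(Y*(Z*w)) := by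
    intro w; rw [← mul_assoc, hZY, smul_mul_assoc, mul_assoc]
  simp only [pow_succ, pow_zero, one_mul, mul_add, add_mul, smul_mul_assoc, mul_smul_comm,
    smul_smul, hYX, hZX, hZY, hYXw, hZXw, hZYw, mul_assoc]
  match_scalars
  all_goals first
    | ring1
    | linear_combination hρ1
    | linear_combination 3*hρ1
    | linear_combination (ρ^2-ρ)*hρ1
    | linear_combination (ρ^2+ρ)*hρ1
    | linear_combination (1-2*ρ)*hρ1
    | linear_combination (1-ρ-ρ^2)*hρ1
    | linear_combination (ρ^2-ρ+1)*hρ1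
    | linear_combination (ρ^2+ρ+1)*hρ1
    | linear_combination -hρ1

lemma cube_sub_scalar (s : F) (u : A) :
    (algebraMap F A s - u)^3
      = algebraMap F A (s^3) - (3*s^2)•u + (3*s)•(u*u) - u^3 := by
  rw [Algebra.algebraMap_eq_smul_one, Algebra.algebraMap_eq_smul_one]
  simp only [pow_succ, pow_zero, one_mul, sub_mul, mul_sub, smul_mul_assoc, mul_smul_comm,
    mul_one, one_mul, smul_smul, smul_sub, sub_smul, add_smul]
  match_scalars <;> ring

lemma vcube (ρ : F) (hρ1 : ρ^2 + ρ + 1 = 0)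
    (x y z : A) (αx αy αz : F)
    (hx3 : x ^ 3 = algebraMap F A αx) (hy3 : y ^ 3 = algebraMap F A αy)
    (hz3 : z ^ 3 = algebraMap F A αz)
    (hyx : y * x = ρ • (x * y)) (hxz : x * z = ρ • (z * x))
    (hzy : z * y = ρ • (y * z)) (a b c : F) :
    (a•x + b•y + c•z)^3
      = algebraMap F A (a^3*αx + b^3*αy + c^3*αz) - (3*ρ^2*(a*b*c))•(x*(y*z)) := by
  have hρ3 : ρ^3 = 1 := by linear_combination (ρ-1)*hρ1
  have hzx : z * x = (ρ^2) • (x * z) := by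
    rw [hxz, smul_smul]
    nth_rewrite 1 [show z * x = (1:F) • (z*x) by rw [one_smul]]
    rw [show ρ^2*ρ = 1 by linear_combination hρ3]
  have rel1 : (b•y)*(a•x) = ρ•((a•x)*(b•y)) := by
    simp only [smul_mul_assoc, mul_smul_comm, hyx, smul_smul]
    match_scalars <;> ring
  have rel2 : (c•z)*(a•x) = (ρ^2)•((a•x)*(c•z)) := by
    simp only [smul_mul_assoc, mul_smul_comm, hzx, smul_smul]
    match_scalars <;> ring
  have rel3 : (c•z)*(b•y) = ρ•((b•y)*(c•z)) := by
    simp only [smul_mul_assoc, mul_smul_comm, hzy, smul_smul]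
    match_scalars <;> ring
  rw [cube3 ρ hρ1 _ _ _ rel1 rel2 rel3, smul_pow, smul_pow, smul_pow, hx3, hy3, hz3]
  congr 1
  · simp only [Algebra.smul_def, ← map_mul, ← map_add]
  · simp only [smul_mul_assoc, mul_smul_comm, smul_smul]
    match_scalars <;> ring

lemma key (h3 : (3:F) ≠ 0) (ρ : F) (hρ1 : ρ^2 + ρ + 1 = 0)
    (x y z : A) (αx αy αz : F)
    (hx3 : x ^ 3 = algebraMap F A αx) (hy3 : y ^ 3 = algebraMap F A αy)
    (hz3 : z ^ 3 = algebraMap F A αz)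
    (hxnc : ∀ s : F, x ≠ algebraMap F A s)
    (hz0 : z ≠ 0)
    (hyx : y * x = ρ • (x * y)) (hxz : x * z = ρ • (z * x))
    (hzy : z * y = ρ • (y * z))
    (a b c s : F) (ha : a ≠ 0) (hs : s ≠ 0)
    (heq : a • x + b • y + c • z = algebraMap F A s) : False := by
  have hρ3 : ρ^3 = 1 := by linear_combination (ρ-1)*hρ1
  have hρ0 : ρ ≠ 0 := by
    intro h; rw [h] at hρ3; simp at hρ3
  have hρne1 : ρ ≠ 1 := by
    intro h; rw [h] at hρ1; apply h3; linear_combination hρ1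
  have h1ρ : (1:F) - ρ ≠ 0 := fun h => hρne1 (by linear_combination -h)
  have h1ρ2 : (1:F) - ρ^2 ≠ 0 := by
    intro h
    have hρ2 : ρ = -2 := by linear_combination hρ1 + h
    rw [hρ2] at h; apply h3; linear_combination -h
  have hzx : z * x = (ρ^2) • (x * z) := by
    rw [hxz, smul_smul]
    nth_rewrite 1 [show z * x = (1:F) • (z*x) by rw [one_smul]]
    rw [show ρ^2*ρ = 1 by linear_combination hρ3]
  -- E1
  have hcomm : a•(x*x) + b•(x*y) + c•(x*z) = a•(x*x) + (b*ρ)•(x*y) + (c*ρ^2)•(x*z) := by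
    calc a•(x*x) + b•(x*y) + c•(x*z) = x * (a•x + b•y + c•z) := by
          simp only [mul_add, mul_smul_comm]
      _ = x * algebraMap F A s := by rw [heq]
      _ = algebraMap F A s * x := (Algebra.commutes s x).symm
      _ = (a•x + b•y + c•z) * x := by rw [heq]
      _ = a•(x*x) + (b*ρ)•(x*y) + (c*ρ^2)•(x*z) := by
          simp only [add_mul, smul_mul_assoc, hyx, hzx, smul_smul]
  have h0 : a•(x*x) + b•(x*y) + c•(x*z) - (a•(x*x) + (b*ρ)•(x*y) + (c*ρ^2)•(x*z)) = 0 :=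
    sub_eq_zero.mpr hcomm
  have E1 : b•(x*y) = (c*ρ^2)•(x*z) := by
    apply my_smul_cancel h1ρ
    apply sub_eq_zero.mp
    rw [← h0]
    match_scalars
    all_goals first
      | ring1
      | linear_combination c*hρ3
      | linear_combination -c*hρ3
      | linear_combination (c*ρ-c)*hρ1
      | linear_combination (c-c*ρ)*hρ1
  -- the cube identity
  have hax : a • x = algebraMap F A s - (b•y + c•z) := by
    rw [← heq]; abel
  have rel1 : (c•z)*(b•y) = ρ•((b•y)*(c•z)) := by
    simp only [smul_mul_assoc, mul_smul_comm, hzy, smul_smul]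
    match_scalars <;> ring
  have rel2 : (0:A)*(b•y) = (ρ^2)•((b•y)*(0:A)) := by simp
  have rel3 : (0:A)*(c•z) = ρ•((c•z)*(0:A)) := by simp
  have hu3 : (b•y + c•z)^3 = algebraMap F A (b^3*αy + c^3*αz) := by
    have h0 := cube3 ρ hρ1 (b•y) (c•z) 0 rel1 rel2 rel3
    simp only [add_zero, mul_zero, smul_zero, sub_zero] at h0
    rw [h0, smul_pow, smul_pow, hy3, hz3]
    simp only [Algebra.smul_def, ← map_mul, ← map_add]
    simp [zero_pow]
  have hcube : algebraMap F A (a^3*αx)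
      = algebraMap F A (s^3) - (3*s^2)•(b•y + c•z) + (3*s)•((b•y + c•z)*(b•y + c•z))
        - algebraMap F A (b^3*αy + c^3*αz) := by
    calc algebraMap F A (a^3*αx) = (a•x)^3 := by
          rw [smul_pow, hx3, Algebra.smul_def, ← map_mul]
      _ = (algebraMap F A s - (b•y + c•z))^3 := by rw [hax]
      _ = _ := by rw [cube_sub_scalar, hu3]
  -- rearrange: (3*s)•(s•u - u*u) = algebraMap T
  have hT : (3*s^2)•(b•y + c•z) - (3*s)•((b•y + c•z)*(b•y + c•z))
      = algebraMap F A (s^3 - (b^3*αy + c^3*αz) - a^3*αx) := by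
    rw [map_sub, map_sub, hcube]; abel
  -- s•u - u*u = u*(a•x)
  have hux : s•(b•y + c•z) - (b•y + c•z)*(b•y + c•z) = (b•y + c•z)*(a•x) := by
    rw [hax, mul_sub]
    congr 1
    rw [← Algebra.commutes, Algebra.smul_def]
  set T := s^3 - (b^3*αy + c^3*αz) - a^3*αx with hTdef
  have hkey : (3*s*a)•(b•(y*x) + c•(z*x)) = algebraMap F A T := by
    rw [← hT]
    have e1 : (3*s*a)•(b•(y*x) + c•(z*x)) = (3*s)•((b•y + c•z)*(a•x)) := by
      simp only [add_mul, smul_mul_assoc, mul_smul_comm, smul_add, smul_smul]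
      match_scalars <;> ring
    rw [e1, ← hux, smul_sub, smul_smul]
    match_scalars <;> ring
  -- rewrite using relations and E1
  have hkey2 : (-(3*s*a*c*ρ))•(x*z) = algebraMap F A T := by
    rw [← hkey, hyx, hzx]
    have eb : b•(ρ•(x*y)) = (ρ*(c*ρ^2))•(x*z) := by
      rw [smul_comm b ρ, E1, smul_smul]
    rw [eb]
    simp only [smul_smul, smul_add, ← add_smul]
    match_scalars
    linear_combination (-3*s*a*c*ρ)*hρ1
  -- both cases give: b•(x*y) = 0 and c•(x*z) = 0
  have hbc : b•(x*y) = 0 ∧ c•(x*z) = 0 := by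
    rcases eq_or_ne c 0 with hc | hc
    · subst hc
      constructor
      · rw [E1]; simp
      · simp
    · have hk : (-(3*s*a*c*ρ)) ≠ 0 := by
        simp only [ne_eq, neg_eq_zero, mul_eq_zero, not_or]
        exact ⟨⟨⟨⟨h3, hs⟩, ha⟩, hc⟩, hρ0⟩
      have hxz0 : x*z = algebraMap F A ((-(3*s*a*c*ρ))⁻¹ * T) := by
        apply my_smul_cancel hk
        rw [hkey2, Algebra.smul_def, ← map_mul, ← mul_assoc,
          mul_inv_cancel₀ hk, one_mul]
      set μ := (-(3*s*a*c*ρ))⁻¹ * T with hμdef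
      have hμz : (μ - ρ^2*μ)•z = 0 := by
        have e2 : z * (x*z) = (z*x)*z := (mul_assoc z x z).symm
        rw [hxz0, hzx, smul_mul_assoc, hxz0] at e2
        rw [← Algebra.commutes] at e2
        rw [sub_smul, ← smul_smul (ρ^2) μ z, Algebra.smul_def μ z, ← e2, sub_self]
      have hμ : μ = 0 := by
        by_contra hμne
        apply hz0
        refine my_smul_cancel (mul_ne_zero hμne h1ρ2) (v := (0:A)) ?_
        have e4 : (μ*(1-ρ^2))•z = (μ - ρ^2*μ)•z := by
          congr 1
          ring
        rw [smul_zero, e4]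
        exact hμz
      have hxz00 : x*z = 0 := by rw [hxz0, hμ]; simp
      constructor
      · rw [E1, hxz00]; simp
      · rw [hxz00]; simp
  -- final contradiction
  have hx2 : a•(x*x) = s•x := by
    calc a•(x*x) = a•(x*x) + b•(x*y) + c•(x*z) := by rw [hbc.1, hbc.2]; abel
      _ = x * (a•x + b•y + c•z) := by simp only [mul_add, mul_smul_comm]
      _ = x * algebraMap F A s := by rw [heq]
      _ = algebraMap F A s * x := (Algebra.commutes s x).symm
      _ = s•x := (Algebra.smul_def s x).symm
  have hx3' : (a*a)•(x*(x*x)) = (s*s)•x := by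
    have e3 : x * (a•(x*x)) = x * (s•x) := by rw [hx2]
    rw [mul_smul_comm, mul_smul_comm] at e3
    calc (a*a)•(x*(x*x)) = a•(a•(x*(x*x))) := by rw [smul_smul]
      _ = a•(s•(x*x)) := by rw [e3]
      _ = s•(a•(x*x)) := by rw [smul_smul, smul_smul, mul_comm]
      _ = s•(s•x) := by rw [hx2]
      _ = (s*s)•x := by rw [smul_smul]
  have hxx3 : x*(x*x) = x^3 := by rw [pow_succ, pow_succ, pow_one, mul_assoc]
  rw [hxx3, hx3] at hx3'
  apply hxnc ((s*s)⁻¹ * (a*a*αx))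
  have hss : (s*s) ≠ 0 := mul_ne_zero hs hs
  apply my_smul_cancel hss
  rw [← hx3', Algebra.smul_def, Algebra.smul_def, ← map_mul, ← map_mul, ← mul_assoc,
    mul_inv_cancel₀ hss, one_mul]

end Helpers


/-- Cyclic triangle of `3`-central elements: with `yx = ρ xy`, `xz = ρ zx`,
`zy = ρ yz`, the span `F x + F y + F z` is a `3`-central space if and only if
`xyz ∈ F`. -/
theorem three_central_triangle_cyclic
    {F A : Type*} [Field F] [Infinite F] [Ring A] [Algebra F A]
    (h3 : (3 : F) ≠ 0) (ρ : F) (hρ : IsPrimitiveRoot ρ 3)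
    (hcentral : ∀ a : A, (∀ b : A, a * b = b * a) → ∃ c : F, a = algebraMap F A c)
    (x y z : A) (αx αy αz : F)
    (hx3 : x ^ 3 = algebraMap F A αx) (hy3 : y ^ 3 = algebraMap F A αy)
    (hz3 : z ^ 3 = algebraMap F A αz)
    (hxnc : ∀ s : F, x ≠ algebraMap F A s)
    (hync : ∀ s : F, y ≠ algebraMap F A s)
    (hznc : ∀ s : F, z ≠ algebraMap F A s)
    (hind : LinearIndependent F ![x, y, z])
    (hyx : y * x = ρ • (x * y)) (hxz : x * z = ρ • (z * x))
    (hzy : z * y = ρ • (y * z)) :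
    (∀ v ∈ Submodule.span F ({x, y, z} : Set A), v ≠ 0 →
        (∀ s : F, v ≠ algebraMap F A s) ∧ ∃ s : F, v ^ 3 = algebraMap F A s) ↔
      ∃ s : F, x * y * z = algebraMap F A s := by
  have hρ3 : ρ^3 = 1 := hρ.pow_eq_one
  have hρne1 : ρ ≠ 1 := hρ.ne_one (by norm_num)
  have hρ1 : ρ^2 + ρ + 1 = 0 := by
    have hfac : (ρ - 1) * (ρ^2 + ρ + 1) = 0 := by linear_combination hρ3
    rcases mul_eq_zero.mp hfac with h | h
    · exact absurd (by linear_combination h) hρne1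
    · exact h
  have h3ρ2 : 3*ρ^2 ≠ 0 := by
    intro h
    rcases mul_eq_zero.mp h with h' | h'
    · exact h3 h'
    · have hρ0 : ρ = 0 := by
        have := pow_eq_zero_iff (n := 2) (by norm_num) |>.mp h'
        exact this
      rw [hρ0] at hρ3; simp at hρ3
  have hindc : ∀ a b c : F, a•x + b•y + c•z = 0 → a = 0 ∧ b = 0 ∧ c = 0 := by
    intro a b c h
    have h2 := Fintype.linearIndependent_iff.mp hind ![a,b,c]
    have h3' : ∑ i, (![a,b,c]) i • (![x,y,z]) i = 0 := by
      simpa [Fin.sum_univ_three] using h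
    exact ⟨h2 h3' 0, h2 h3' 1, h2 h3' 2⟩
  have hx0 : x ≠ 0 := by simpa using hind.ne_zero 0
  have hy0 : y ≠ 0 := by simpa using hind.ne_zero 1
  have hz0 : z ≠ 0 := by simpa using hind.ne_zero 2
  constructor
  · intro H
    have hxm : x ∈ Submodule.span F ({x,y,z} : Set A) := Submodule.subset_span (by simp)
    have hym : y ∈ Submodule.span F ({x,y,z} : Set A) := Submodule.subset_span (by simp)
    have hzm : z ∈ Submodule.span F ({x,y,z} : Set A) := Submodule.subset_span (by simp)
    have hmem : x + y + z ∈ Submodule.span F ({x,y,z} : Set A) :=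
      Submodule.add_mem _ (Submodule.add_mem _ hxm hym) hzm
    have hne : x + y + z ≠ 0 := by
      intro h
      have h' : (1:F)•x + (1:F)•y + (1:F)•z = 0 := by simpa using h
      exact one_ne_zero ((hindc 1 1 1 h').1)
    obtain ⟨-, t, ht⟩ := H (x+y+z) hmem hne
    have hv := vcube ρ hρ1 x y z αx αy αz hx3 hy3 hz3 hyx hxz hzy 1 1 1
    simp only [one_smul, one_pow, one_mul, mul_one] at hv
    rw [ht] at hv
    have hsm : (3*ρ^2)•(x*(y*z)) = algebraMap F A (αx+αy+αz-t) := by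
      rw [map_sub, hv]
      abel
    refine ⟨(3*ρ^2)⁻¹ * (αx+αy+αz-t), ?_⟩
    rw [mul_assoc]
    apply my_smul_cancel h3ρ2
    rw [hsm, Algebra.smul_def, ← map_mul, ← mul_assoc, mul_inv_cancel₀ h3ρ2, one_mul]
  · rintro ⟨t, ht⟩ v hv hv0
    rw [show ({x, y, z} : Set A) = insert x {y, z} from rfl] at hv
    obtain ⟨a, w1, hw1, rfl⟩ := Submodule.mem_span_insert.mp hv
    rw [show ({y, z} : Set A) = insert y {z} from rfl] at hw1
    obtain ⟨b, w2, hw2, rfl⟩ := Submodule.mem_span_insert.mp hw1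
    obtain ⟨c, rfl⟩ := Submodule.mem_span_singleton.mp hw2
    constructor
    · intro s hvs
      have heq : a•x + b•y + c•z = algebraMap F A s := by rw [add_assoc]; exact hvs
      have hs : s ≠ 0 := by
        intro h0; rw [h0, map_zero] at hvs; exact hv0 hvs
      rcases eq_or_ne a 0 with haz | ha
      · rcases eq_or_ne b 0 with hbz | hb
        · rcases eq_or_ne c 0 with hcz | hc
          · apply hv0; rw [haz, hbz, hcz]; simp
          · exact key h3 ρ hρ1 z x y αz αx αy hz3 hx3 hy3 hznc hy0 hxz hzy hyx
              c a b s hc hs (by rw [← heq]; abel)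
        · exact key h3 ρ hρ1 y z x αy αz αx hy3 hz3 hx3 hync hx0 hzy hyx hxz
            b c a s hb hs (by rw [← heq]; abel)
      · exact key h3 ρ hρ1 x y z αx αy αz hx3 hy3 hz3 hxnc hz0 hyx hxz hzy
          a b c s ha hs heq
    · refine ⟨a^3*αx + b^3*αy + c^3*αz - 3*ρ^2*(a*b*c)*t, ?_⟩
      have hv3 := vcube ρ hρ1 x y z αx αy αz hx3 hy3 hz3 hyx hxz hzy a b c
      calc (a•x + (b•y + c•z))^3 = (a•x + b•y + c•z)^3 := by rw [add_assoc]
        _ = algebraMap F A (a^3*αx+b^3*αy+c^3*αz) - (3*ρ^2*(a*b*c))•(x*(y*z)) := hv3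
        _ = _ := by
            rw [← mul_assoc x y z, ht, Algebra.smul_def, ← map_mul, ← map_sub]
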